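/- Let (M,g) be a Riemannian manifold, F : ℝ → ℝ smooth, and suppose E_F(g) = λ g for a constant λ. Then for every symmetric 2-covariant tensor field h, (F'(S)/2)(Ric ∘ h + h ∘ Ric) = [λ + Δ F'(S) + (1/2) F(S)] h + (h(∇_· grad F'(S), ·))^σ. -/
import Mathlib


/-!
**STATEMENT 16.**  Let `(M, g)` be a Riemannian manifold, `F : ℝ → ℝ` smooth,
and suppose `E_F(g) = λ g` for a constant `λ`.  Then for every symmetric
`2`-covariant tensor field `h`,
`(F'(S)/2)(Ric ∘ h + h ∘ Ric) = [λ + Δ F'(S) + (1/2) F(S)] h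
                                  + (h(∇_· grad F'(S), ·))^σ`.

Smooth functions on `M` are modelled as elements of `M → ℝ` and `Sym2T` is the
space of symmetric `2`-covariant tensor fields.  `comp` is the composition
`(T ∘ Q)(X,Y) = Σᵢ T(X,eᵢ) Q(Y,eᵢ)` of symmetric `2`-tensors, which is
biadditive, `(M → ℝ)`-bilinear and has the metric as identity on symmetric
tensors.  The symmetrised tensor `(h(∇_· grad F'(S), ·))^σ` is the datum
`sigmaTerm`; since `h(∇_X grad F'(S), Y) = (Hess F'(S) ∘ h)(X,Y)`, it equals
the symmetrisation `(1/2)(Hess F'(S) ∘ h + h ∘ Hess F'(S))`.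
-/
theorem composition_identity_under_EF_proportional_to_metric
    {M : Type*} {Sym2T : Type*}
    [AddCommGroup Sym2T] [Module (M → ℝ) Sym2T] [Module ℝ Sym2T]
    -- the geometric data of the Riemannian manifold (M, g)
    (gmet Ric : Sym2T) (S : M → ℝ)
    (Hess : (M → ℝ) → Sym2T) (lap : (M → ℝ) → M → ℝ)
    (comp : Sym2T → Sym2T → Sym2T)
    -- F is a smooth function on ℝ
    (F : ℝ → ℝ) (hF : ContDiff ℝ (⊤ : ℕ∞) F)
    -- E_F(g) = λ g for a constant λ
    (lam : ℝ)
    (hEF : (deriv F ∘ S) • Ric - Hess (deriv F ∘ S)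
        - (lap (deriv F ∘ S) + (1 / 2 : ℝ) • (F ∘ S)) • gmet
        = (fun _ => lam : M → ℝ) • gmet)
    -- the symmetric 2-covariant tensor field h
    (h : Sym2T)
    -- properties of the composition ∘ of symmetric 2-tensors
    (hcomp_addl : ∀ T Q R : Sym2T, comp (T + Q) R = comp T R + comp Q R)
    (hcomp_addr : ∀ T Q R : Sym2T, comp T (Q + R) = comp T Q + comp T R)
    (hcomp_smull : ∀ (u : M → ℝ) (T Q : Sym2T), comp (u • T) Q = u • comp T Q)
    (hcomp_smulr : ∀ (u : M → ℝ) (T Q : Sym2T), comp T (u • Q) = u • comp T Q)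
    (hcompg : comp gmet h = h) (hcompg' : comp h gmet = h)
    -- the term (h(∇_· grad F'(S), ·))^σ
    (sigmaTerm : Sym2T)
    (hsigma : sigmaTerm = (1 / 2 : ℝ) •
      (comp (Hess (deriv F ∘ S)) h + comp h (Hess (deriv F ∘ S)))) :
    -- conclusion
    ((1 / 2 : ℝ) • (deriv F ∘ S)) • (comp Ric h + comp h Ric)
      = ((fun _ => lam : M → ℝ) + lap (deriv F ∘ S) + (1 / 2 : ℝ) • (F ∘ S)) • h
        + sigmaTerm := by
  set u : M → ℝ := deriv F ∘ S with hu
  set A : Sym2T := Hess u with hA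
  set c : M → ℝ := (fun _ => lam) + lap u + (1 / 2 : ℝ) • (F ∘ S) with hc
  -- half lemma
  have half : ∀ y : Sym2T, (1 / 2 : M → ℝ) • y = (1 / 2 : ℝ) • y := by
    intro y
    have h3 : (1 / 2 : ℝ) • y + (1 / 2 : ℝ) • y = y := by
      rw [← two_smul ℝ, smul_smul]; norm_num
    calc (1 / 2 : M → ℝ) • y = (1 / 2 : M → ℝ) • ((1 / 2 : ℝ) • y + (1 / 2 : ℝ) • y) := by
          rw [h3]
      _ = ((1 / 2 : M → ℝ) * (2 : M → ℝ)) • ((1 / 2 : ℝ) • y) := by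
          rw [mul_smul, two_smul]
      _ = (1 / 2 : ℝ) • y := by
          have : (1 / 2 : M → ℝ) * (2 : M → ℝ) = 1 := by
            funext x; simp
          rw [this, one_smul]
  -- rearrange hEF
  have key : u • Ric = A + c • gmet := by
    have := hEF
    rw [sub_sub, sub_eq_iff_eq_add] at this
    rw [this, hc, add_smul, add_smul, add_smul]
    abel
  -- compose
  have e1 : u • comp Ric h = comp A h + c • h := by
    rw [← hcomp_smull, key, hcomp_addl, hcomp_smull, hcompg]
  have e2 : u • comp h Ric = comp h A + c • h := by
    rw [← hcomp_smulr, key, hcomp_addr, hcomp_smulr, hcompg']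
  have e3 : u • (comp Ric h + comp h Ric)
      = (comp A h + comp h A) + (c • h + c • h) := by
    rw [smul_add, e1, e2]; abel
  have lhs : ((1 / 2 : ℝ) • u) • (comp Ric h + comp h Ric)
      = (1 / 2 : M → ℝ) • (u • (comp Ric h + comp h Ric)) := by
    have hsc : ((1 / 2 : ℝ) • u : M → ℝ) = (1 / 2 : M → ℝ) * u := by
      funext x; simp
    rw [hsc, mul_smul]
  rw [lhs, e3, smul_add, half, ← hsigma]
  have : (1 / 2 : M → ℝ) • (c • h + c • h) = c • h := by
    rw [← two_smul (M → ℝ), smul_smul]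
    have : (1 / 2 : M → ℝ) * (2 : M → ℝ) = 1 := by funext x; simp
    rw [this, one_smul]
  rw [this]
  abel
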